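/- Fix x ∈ (0,1]. For any word w ∈ Ω_n(x) and any base β > β̲(w), the word w is admissible in base β, i.e., w ∈ Σ_n(β). -/

import Mathlib

open MeasureTheory Set
open scoped Classical

/-- The beta-transformation `T_β x = βx - ⌊βx⌋`. -/
noncomputable def betaT (β x : ℝ) : ℝ := Int.fract (β * x)

/-- The `k`-th digit (0-indexed) of the β-expansion of `x`: `ε_{k+1}(x,β) = ⌊β T_β^k x⌋`. -/
noncomputable def betaDigit (β x : ℝ) (k : ℕ) : ℕ := ⌊β * (betaT β)^[k] x⌋₊

/-- `Σ_n(β)`: admissible words of length `n`, i.e. prefixes of β-expansions of points of `[0,1)`. -/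
def admWords (β : ℝ) (n : ℕ) : Set (Fin n → ℕ) :=
  {w | ∃ x ∈ Set.Ico (0:ℝ) 1, ∀ i : Fin n, w i = betaDigit β x i}

/-- The cylinder `𝔍(w)` of points of `[0,1)` whose β-expansion starts with `w`. -/
def cyl (β : ℝ) {n : ℕ} (w : Fin n → ℕ) : Set ℝ :=
  {x | x ∈ Set.Ico (0:ℝ) 1 ∧ ∀ i : Fin n, betaDigit β x i = w i}

/-- `Ξ_n(β)`: admissible words of length `n` whose cylinder is full (of length `β^{-n}`). -/
def fullWords (β : ℝ) (n : ℕ) : Set (Fin n → ℕ) :=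
  {w | w ∈ admWords β n ∧ volume (cyl β w) = ENNReal.ofReal (1 / β ^ n)}

/-- `ε(β)`: the β-expansion of 1 (0-indexed). -/
noncomputable def eps1 (β : ℝ) (k : ℕ) : ℕ := betaDigit β 1 k

/-- `ε*(β)`: the infinite β-expansion of 1.  If `ε(β)` has a last nonzero digit at
(0-indexed) position `N`, it is the periodic sequence `(ε_0 ⋯ ε_{N-1} (ε_N - 1))^∞`;
otherwise it is `ε(β)` itself. -/

noncomputable def epsStar (β : ℝ) : ℕ → ℕ :=
  if h : ∃ N, eps1 β N ≠ 0 ∧ ∀ k, N < k → eps1 β k = 0 then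
    fun k => if k % (h.choose + 1) = h.choose then eps1 β h.choose - 1
             else eps1 β (k % (h.choose + 1))
  else eps1 β

/-- Strict lexicographic order on sequences of nonnegative integers. -/
def lexLt (a b : ℕ → ℕ) : Prop := ∃ i, (∀ j, j < i → a j = b j) ∧ a i < b i

/-- Strict lexicographic order on words of length `n`. -/
def wordLt {n : ℕ} (a b : Fin n → ℕ) : Prop :=
  ∃ i : Fin n, (∀ j, j < i → a j = b j) ∧ a i < b i

/-- `Ω_n(x)`: all length-`n` prefixes of β-expansions of `x` over all bases `β > 1`. -/
def prefWords (x : ℝ) (n : ℕ) : Set (Fin n → ℕ) :=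
  {w | ∃ β : ℝ, 1 < β ∧ ∀ i : Fin n, w i = betaDigit β x i}

/-- The parameter cylinder `I(w) = {β > 1 : ε_1(x,β)⋯ε_n(x,β) = w}`. -/
def pcyl (x : ℝ) {n : ℕ} (w : Fin n → ℕ) : Set ℝ :=
  {β | 1 < β ∧ ∀ i : Fin n, betaDigit β x i = w i}

/-- `Λ_n(x)`: words whose parameter cylinder is full, i.e. `{T_β^n x : β ∈ I(w)} = [0,1)`. -/
def pfull (x : ℝ) (n : ℕ) : Set (Fin n → ℕ) :=
  {w | w ∈ prefWords x n ∧ (fun β => (betaT β)^[n] x) '' pcyl x w = Set.Ico (0:ℝ) 1}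

noncomputable def tailVal (W : ℕ → ℝ) (n : ℕ) (b : ℝ) (k : ℕ) : ℝ :=
  ∑ j ∈ Finset.range (n - k), W (k + j) / b ^ (j + 1)

noncomputable def headVal (W : ℕ → ℝ) (b : ℝ) (k : ℕ) : ℝ :=
  ∑ i ∈ Finset.range k, W i / b ^ (i + 1)

lemma tailVal_nonneg {W : ℕ → ℝ} (hW : ∀ i, 0 ≤ W i) {n : ℕ} {b : ℝ} (hb : 0 < b) (k : ℕ) :
    0 ≤ tailVal W n b k := by
  apply Finset.sum_nonneg
  intro j _
  exact div_nonneg (hW _) (le_of_lt (pow_pos hb _))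

lemma tailVal_rec (W : ℕ → ℝ) {n : ℕ} {b : ℝ} (hb : b ≠ 0) {k : ℕ} (hk : k < n) :
    b * tailVal W n b k = W k + tailVal W n b (k + 1) := by
  have hm : n - k = (n - (k + 1)) + 1 := by omega
  rw [tailVal, tailVal, hm, Finset.sum_range_succ', mul_add, Finset.mul_sum]
  have h1 : ∀ j, b * (W (k + (j + 1)) / b ^ (j + 1 + 1)) = W (k + 1 + j) / b ^ (j + 1) := by
    intro j
    rw [show k + (j + 1) = k + 1 + j by ring, pow_succ]
    field_simp
  simp_rw [h1]
  rw [add_comm]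
  congr 1
  rw [add_zero, pow_one, mul_div_cancel₀ _ hb]

lemma tailVal_split (W : ℕ → ℝ) {n : ℕ} {b : ℝ} (hb : b ≠ 0) :
    ∀ k, k ≤ n → tailVal W n b 0 = headVal W b k + tailVal W n b k / b ^ k := by
  intro k
  induction k with
  | zero =>
    intro _
    simp [headVal]
  | succ k ih =>
    intro hk
    have hk' : k < n := by omega
    rw [ih (le_of_lt hk')]
    have hrec := tailVal_rec W hb hk'
    have hbk : (b : ℝ) ^ k ≠ 0 := pow_ne_zero _ hb
    have ht : tailVal W n b k = (W k + tailVal W n b (k + 1)) / b := by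
      field_simp
      linarith [hrec]
    rw [ht]
    simp only [headVal, Finset.sum_range_succ]
    rw [div_div, ← pow_succ']
    ring

theorem prefWord_admissible (x : ℝ) (hx : x ∈ Set.Ioc (0:ℝ) 1) (n : ℕ)
    (w : Fin n → ℕ) (hw : w ∈ prefWords x n) (βw : ℝ)
    (hβw : (w = 0 ∧ βw = 1) ∨
      (w ≠ 0 ∧ 0 < βw ∧ x = ∑ i : Fin n, (w i : ℝ) / βw ^ ((i : ℕ) + 1)))
    (β : ℝ) (hβ : βw < β) : w ∈ admWords β n := by
  obtain ⟨hx0, hx1⟩ := hx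
  rcases hβw with ⟨hw0, hβw1⟩ | ⟨hwne, hβwpos, hxsum⟩
  · -- w = 0 : take y = 0
    refine ⟨0, ⟨le_refl 0, one_pos⟩, ?_⟩
    have hit : ∀ k, (betaT β)^[k] (0:ℝ) = 0 := by
      intro k
      induction k with
      | zero => rfl
      | succ k ih => rw [Function.iterate_succ_apply', ih, betaT, mul_zero, Int.fract_zero]
    intro i
    simp [hw0, betaDigit, hit]
  · -- main case
    obtain ⟨β₀, hβ₀, hdig⟩ := hw
    have hβ₀pos : (0:ℝ) < β₀ := lt_trans one_pos hβ₀
    set W : ℕ → ℝ := fun i => if h : i < n then ((w ⟨i, h⟩ : ℕ) : ℝ) else 0 with hWdef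
    have hWnn : ∀ i, 0 ≤ W i := by
      intro i
      by_cases h : i < n <;> simp [hWdef, h]
    have hWval : ∀ i (h : i < n), W i = ((w ⟨i, h⟩ : ℕ) : ℝ) := by
      intro i h; simp [hWdef, h]
    have hxw : x = tailVal W n βw 0 := by
      rw [hxsum, tailVal]
      simp only [Nat.sub_zero, zero_add]
      rw [← Fin.sum_univ_eq_sum_range (fun i => W i / βw ^ (i + 1)) n]
      apply Finset.sum_congr rfl
      intro i _
      rw [hWval i i.isLt]
    -- the β₀-expansion of x
    set r : ℕ → ℝ := fun k => (betaT β₀)^[k] x with hrdef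
    have hr0 : ∀ k, 0 ≤ r k := by
      intro k
      cases k with
      | zero => exact le_of_lt hx0
      | succ k =>
        show 0 ≤ (betaT β₀)^[k+1] x
        rw [Function.iterate_succ_apply']
        exact Int.fract_nonneg _
    have hr1 : ∀ k, 0 < k → r k < 1 := by
      intro k hk
      obtain ⟨m, rfl⟩ : ∃ m, k = m + 1 := ⟨k - 1, by omega⟩
      show (betaT β₀)^[m+1] x < 1
      rw [Function.iterate_succ_apply']
      exact Int.fract_lt_one _
    have hfl : ∀ k (h : k < n), W k = (⌊β₀ * r k⌋₊ : ℝ) := by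
      intro k h
      rw [hWval k h, hdig ⟨k, h⟩]
      rfl
    have hrrec : ∀ k, k < n → r (k + 1) = β₀ * r k - W k := by
      intro k hk
      have ha : 0 ≤ β₀ * r k := mul_nonneg (le_of_lt hβ₀pos) (hr0 k)
      have h1 : r (k+1) = Int.fract (β₀ * r k) := by
        show (betaT β₀)^[k+1] x = _
        rw [Function.iterate_succ_apply']
        rfl
      rw [h1, Int.fract, hfl k hk]
      congr 1
      have h2 := Int.toNat_of_nonneg (Int.floor_nonneg.mpr ha)
      rw [← Int.floor_toNat]
      exact_mod_cast (congrArg (Int.cast : ℤ → ℝ) h2).symm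
    have hexp : ∀ k, k ≤ n → x = headVal W β₀ k + r k / β₀ ^ k := by
      intro k
      induction k with
      | zero => intro _; simp [headVal, hrdef]
      | succ k ih =>
        intro hk
        have hk' : k < n := by omega
        rw [ih (le_of_lt hk'), hrrec k hk']
        simp only [headVal, Finset.sum_range_succ]
        have hne : (β₀:ℝ) ≠ 0 := ne_of_gt hβ₀pos
        field_simp
        ring
    have hheadtail : headVal W β₀ n = tailVal W n β₀ 0 := by
      rw [tailVal, headVal]
      simp
    have hT0 : tailVal W n β₀ 0 ≤ x := by
      have h := hexp n le_rfl
      have h2 : 0 ≤ r n / β₀ ^ n := div_nonneg (hr0 n) (le_of_lt (pow_pos hβ₀pos n))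
      rw [← hheadtail]
      linarith
    obtain ⟨i0, hi0⟩ : ∃ i : Fin n, w i ≠ 0 := by
      by_contra h
      push_neg at h
      exact hwne (funext fun i => h i)
    have hWpos : 0 < W i0 := by
      rw [hWval i0 i0.isLt]
      simp only [Fin.eta]
      exact_mod_cast Nat.pos_of_ne_zero hi0
    have hmono : ∀ b b' : ℝ, 0 < b → b < b' → tailVal W n b' 0 < tailVal W n b 0 := by
      intro b b' hb hbb
      rw [tailVal, tailVal]
      apply Finset.sum_lt_sum
      · intro i _
        have hWi := hWnn (0 + i)
        gcongr
      · refine ⟨(i0 : ℕ), Finset.mem_range.mpr i0.isLt, ?_⟩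
        have hp : 0 < W (0 + (i0:ℕ)) := by rwa [zero_add]
        gcongr
    have hβwβ₀ : βw ≤ β₀ := by
      by_contra h
      push_neg at h
      have h2 := hmono β₀ βw hβ₀pos h
      rw [← hxw] at h2
      linarith
    have hβw1 : 1 ≤ βw := by
      by_contra h
      push_neg at h
      have h2 := hmono βw 1 hβwpos h
      rw [← hxw] at h2
      have h3 : (1:ℝ) ≤ tailVal W n 1 0 := by
        rw [tailVal]
        have hterm : (1:ℝ) ≤ W (0 + (i0:ℕ)) / 1 ^ ((i0:ℕ) + 1) := by
          simp only [one_pow, div_one, zero_add]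
          rw [hWval (i0:ℕ) i0.isLt]
          exact_mod_cast Nat.one_le_iff_ne_zero.mpr hi0
        calc (1:ℝ) ≤ W (0 + (i0:ℕ)) / 1 ^ ((i0:ℕ) + 1) := hterm
          _ ≤ ∑ j ∈ Finset.range (n - 0), W (0 + j) / 1 ^ (j + 1) :=
            Finset.single_le_sum (f := fun j => W (0 + j) / 1 ^ (j + 1)) (fun j _ => div_nonneg (hWnn _) (by positivity))
              (by exact Finset.mem_range.mpr (by omega : (i0:ℕ) < n - 0))
      linarith
    have hβpos : 0 < β := lt_trans hβwpos hβ
    have hβne : β ≠ 0 := ne_of_gt hβpos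
    have hβwne : βw ≠ 0 := ne_of_gt hβwpos
    have htw : ∀ k, k ≤ n → tailVal W n βw k ≤ 1 := by
      intro k hk
      rcases Nat.eq_zero_or_pos k with h0 | hpos
      · rw [h0, ← hxw]; exact hx1
      · have hsplitw := tailVal_split W hβwne k hk
        rw [← hxw] at hsplitw
        have h1 : x < headVal W β₀ k + 1 / β₀ ^ k := by
          have he := hexp k hk
          have hr := hr1 k hpos
          have hpk : (0:ℝ) < β₀ ^ k := pow_pos hβ₀pos k
          have : r k / β₀ ^ k < 1 / β₀ ^ k := by gcongr
          linarith
        have h2 : headVal W β₀ k ≤ headVal W βw k := by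
          rw [headVal, headVal]
          apply Finset.sum_le_sum
          intro i _
          have := hWnn i
          gcongr
        have h3 : 1 / β₀ ^ k ≤ 1 / βw ^ k := by gcongr
        have h4 : tailVal W n βw k / βw ^ k < 1 / βw ^ k := by linarith
        have hpk : (0:ℝ) < βw ^ k := pow_pos hβwpos k
        have h5 := (div_lt_div_iff_of_pos_right hpk).mp h4
        linarith
    have hkey : ∀ k, k ≤ n → tailVal W n β k < 1 := by
      intro k hk
      have hstep : tailVal W n β k ≤ (βw / β) * tailVal W n βw k := by
        rw [tailVal, tailVal, Finset.mul_sum]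
        apply Finset.sum_le_sum
        intro j _
        have heq : (βw / β) * (W (k + j) / βw ^ (j + 1)) = W (k + j) / (β * βw ^ j) := by
          rw [pow_succ]
          field_simp
        rw [heq]
        have hd : β * βw ^ j ≤ β ^ (j + 1) := by
          rw [pow_succ']
          exact mul_le_mul_of_nonneg_left
            (pow_le_pow_left₀ (le_of_lt hβwpos) (le_of_lt hβ) j) (le_of_lt hβpos)
        have hWj := hWnn (k + j)
        gcongr
      have hfin : (βw / β) * tailVal W n βw k ≤ (βw / β) * 1 :=
        mul_le_mul_of_nonneg_left (htw k hk) (by positivity)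
      have hlt : βw / β < 1 := (div_lt_one hβpos).mpr hβ
      linarith
    refine ⟨tailVal W n β 0, ⟨tailVal_nonneg hWnn hβpos 0, hkey 0 (Nat.zero_le n)⟩, ?_⟩
    have hiter : ∀ k, k ≤ n → (betaT β)^[k] (tailVal W n β 0) = tailVal W n β k := by
      intro k
      induction k with
      | zero => intro _; rfl
      | succ k ih =>
        intro hk
        have hk' : k < n := by omega
        rw [Function.iterate_succ_apply', ih (le_of_lt hk')]
        show Int.fract (β * tailVal W n β k) = _
        rw [tailVal_rec W hβne hk', hWval k hk', Int.fract_natCast_add]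
        exact Int.fract_eq_self.mpr ⟨tailVal_nonneg hWnn hβpos _, hkey (k+1) hk⟩
    intro i
    rw [betaDigit, hiter (i:ℕ) (le_of_lt i.isLt), tailVal_rec W hβne i.isLt, hWval (i:ℕ) i.isLt]
    simp only [Fin.eta]
    rw [add_comm, Nat.floor_add_natCast (tailVal_nonneg hWnn hβpos _),
      Nat.floor_eq_zero.mpr (hkey ((i:ℕ)+1) i.isLt), zero_add]
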